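/- In the 2-class premium game, fix θ₂ ∈ Θ. Then for every θ₁ ∈ (μ, θ₂), the function θ ↦ J¹(θ; θ₂) is differentiable at θ₁ with derivative k₁(η̄ − 1)·( θ₁(a + κ(1−a)) − m ) + η̄·( (a + κ(1−a)) + (θ₁(1−κ) + b*)·q ), where η̄ := η(θ₂−θ₁) = 1 − (1−k₂)e^{−k₁(θ₂−θ₁)}, b* := δ(κ−1)(η̄θ₁ + (1−η̄)θ₂), a := F_L(b*), m := ∫_{b*}^∞ ℓ f_L(ℓ)dℓ, and q := f_L(b*)·δ(κ−1)·( η̄ + k₁(θ₂−θ₁)(1−η̄) ). -/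

import Mathlib

noncomputable section

open MeasureTheory Set

/-- Cumulative distribution function of the loss: point mass `p₀` at zero plus density `fL`. -/
def lossCdf (p₀ : ℝ) (fL : ℝ → ℝ) (x : ℝ) : ℝ := p₀ + ∫ ℓ in (0:ℝ)..x, fL ℓ

/-- The exponential choice function `η`. -/
def expEta (k₁ k₂ t : ℝ) : ℝ :=
  if 0 ≤ t then 1 - (1 - k₂) * Real.exp (-(k₁ * t)) else k₂ * Real.exp (k₁ * t)

/-- Insureds' optimal reporting barrier `b*(θ₁,θ₂) = δ(κ−1)(η̄θ₁ + (1−η̄)θ₂)`. -/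
def repBarrier (δ κ k₁ k₂ θ₁ θ₂ : ℝ) : ℝ :=
  δ * (κ - 1) * (expEta k₁ k₂ (θ₂ - θ₁) * θ₁ + (1 - expEta k₁ k₂ (θ₂ - θ₁)) * θ₂)

/-- `a = F_L(b*(θ₁,θ₂))`: probability that the loss is hidden. -/
def aProb (p₀ : ℝ) (fL : ℝ → ℝ) (δ κ k₁ k₂ θ₁ θ₂ : ℝ) : ℝ :=
  lossCdf p₀ fL (repBarrier δ κ k₁ k₂ θ₁ θ₂)

/-- `m = ∫_{b*(θ₁,θ₂)}^∞ ℓ f_L(ℓ) dℓ`: expected reported loss. -/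
def mRep (fL : ℝ → ℝ) (δ κ k₁ k₂ θ₁ θ₂ : ℝ) : ℝ :=
  ∫ ℓ in Set.Ioi (repBarrier δ κ k₁ k₂ θ₁ θ₂), ℓ * fL ℓ

/-- Company 1's expected per-period profit `J¹(θ₁;θ₂)`. -/
def J1 (p₀ : ℝ) (fL : ℝ → ℝ) (δ κ k₁ k₂ θ₁ θ₂ : ℝ) : ℝ :=
  expEta k₁ k₂ (θ₂ - θ₁) *
    (θ₁ * (aProb p₀ fL δ κ k₁ k₂ θ₁ θ₂ + κ * (1 - aProb p₀ fL δ κ k₁ k₂ θ₁ θ₂))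
      - mRep fL δ κ k₁ k₂ θ₁ θ₂)

/-- Company 2's expected per-period profit `J²(θ₂;θ₁)`. -/
def J2 (p₀ : ℝ) (fL : ℝ → ℝ) (δ κ k₁ k₂ θ₂ θ₁ : ℝ) : ℝ :=
  (1 - expEta k₁ k₂ (θ₂ - θ₁)) *
    (θ₂ * (aProb p₀ fL δ κ k₁ k₂ θ₁ θ₂ + κ * (1 - aProb p₀ fL δ κ k₁ k₂ θ₁ θ₂))
      - mRep fL δ κ k₁ k₂ θ₁ θ₂)

/-- `A₁ = k₂(2−δk₂)/(2−k₂)`. -/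
def A1 (δ k₂ : ℝ) : ℝ := k₂ * (2 - δ * k₂) / (2 - k₂)

/-- `A₂ = (1−k₂)(2−δ(1−k₂))/(1+k₂)`. -/
def A2 (δ k₂ : ℝ) : ℝ := (1 - k₂) * (2 - δ * (1 - k₂)) / (1 + k₂)

/-- `m₁ = k₁/(δ(κ−1)²k₂·max(2A₁, 2δ−A₁))`. -/
def m1 (δ κ k₁ k₂ : ℝ) : ℝ :=
  k₁ / (δ * (κ - 1) ^ 2 * k₂ * max (2 * A1 δ k₂) (2 * δ - A1 δ k₂))

/-- `m₂ = k₁/(δ(κ−1)²(1−k₂)·max(2A₂, 2δ−A₂))`. -/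
def m2 (δ κ k₁ k₂ : ℝ) : ℝ :=
  k₁ / (δ * (κ - 1) ^ 2 * (1 - k₂) * max (2 * A2 δ k₂) (2 * δ - A2 δ k₂))

/-- The premium strategy set `Θ = [μ, M/κ]`. -/
def Theta (μ M κ : ℝ) : Set ℝ := Set.Icc μ (M / κ)

/-- The interval `I_L = [δ(κ−1)μ, δ(κ−1)M/κ]` of possible barriers. -/
def IL (δ κ μ M : ℝ) : Set ℝ := Set.Icc (δ * (κ - 1) * μ) (δ * (κ - 1) * (M / κ))


/-- Smooth version of `expEta` (valid for nonnegative arguments), as a function of `θ`. -/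
def Efun (k₁ k₂ θ₂ θ : ℝ) : ℝ := 1 - (1 - k₂) * Real.exp (-(k₁ * (θ₂ - θ)))

/-- Smooth version of the reporting barrier, as a function of `θ`. -/
def Bfun (δ κ k₁ k₂ θ₂ θ : ℝ) : ℝ :=
  δ * (κ - 1) * (Efun k₁ k₂ θ₂ θ * θ + (1 - Efun k₁ k₂ θ₂ θ) * θ₂)

lemma Efun_hasDerivAt (k₁ k₂ θ₂ θ : ℝ) :
    HasDerivAt (fun θ => Efun k₁ k₂ θ₂ θ) (k₁ * (Efun k₁ k₂ θ₂ θ - 1)) θ := by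
  have h1 : HasDerivAt (fun θ : ℝ => -(k₁ * (θ₂ - θ))) k₁ θ := by
    have := (((hasDerivAt_id θ).const_sub θ₂).const_mul k₁).neg
    exact this.congr_deriv (by ring)
  have h2 := h1.exp
  have h3 := (HasDerivAt.const_mul (1 - k₂) h2).const_sub 1
  exact h3.congr_deriv (by simp only [Efun]; ring)

lemma Bfun_hasDerivAt (δ κ k₁ k₂ θ₂ θ : ℝ) :
    HasDerivAt (fun θ => Bfun δ κ k₁ k₂ θ₂ θ)
      (δ * (κ - 1) * (Efun k₁ k₂ θ₂ θ + k₁ * (θ₂ - θ) * (1 - Efun k₁ k₂ θ₂ θ))) θ := by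
  have hE := Efun_hasDerivAt k₁ k₂ θ₂ θ
  have h1 : HasDerivAt (fun θ => Efun k₁ k₂ θ₂ θ * θ + (1 - Efun k₁ k₂ θ₂ θ) * θ₂)
      ((k₁ * (Efun k₁ k₂ θ₂ θ - 1)) * θ + Efun k₁ k₂ θ₂ θ * 1
        + (-(k₁ * (Efun k₁ k₂ θ₂ θ - 1))) * θ₂) θ :=
    (hE.mul (hasDerivAt_id θ)).add ((hE.const_sub 1).mul_const θ₂)
  have h2 := HasDerivAt.const_mul (δ * (κ - 1)) h1
  exact h2.congr_deriv (by ring)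

/-- FTC: derivative of the running integral of a function integrable and continuous on `Ioi 0`. -/
lemma ftc_aux (f : ℝ → ℝ) (hfc : ContinuousOn f (Set.Ioi 0))
    (hfint : IntegrableOn f (Set.Ioi 0)) {x : ℝ} (hx : 0 < x) :
    HasDerivAt (fun u => ∫ ℓ in (0:ℝ)..u, f ℓ) (f x) x := by
  apply intervalIntegral.integral_hasDerivAt_right
  · rw [intervalIntegrable_iff, Set.uIoc_of_le hx.le]
    exact hfint.mono_set Set.Ioc_subset_Ioi_self
  · exact ⟨Set.Ioi 0, Ioi_mem_nhds hx, hfc.aestronglyMeasurable measurableSet_Ioi⟩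
  · exact hfc.continuousAt (Ioi_mem_nhds hx)

/-- Splitting the tail integral. -/
lemma tail_aux (f : ℝ → ℝ) (hfint : IntegrableOn f (Set.Ioi 0)) {x : ℝ} (hx : 0 < x) :
    ∫ ℓ in Set.Ioi x, f ℓ = (∫ ℓ in Set.Ioi (0:ℝ), f ℓ) - ∫ ℓ in (0:ℝ)..x, f ℓ := by
  rw [intervalIntegral.integral_of_le hx.le]
  have h := MeasureTheory.setIntegral_union (Set.Ioc_disjoint_Ioi le_rfl) measurableSet_Ioi
    (hfint.mono_set Set.Ioc_subset_Ioi_self) (hfint.mono_set (Set.Ioi_subset_Ioi hx.le))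
  rw [Set.Ioc_union_Ioi_eq_Ioi hx.le] at h
  linarith

/-- derivative formula for Company 1's profit `θ ↦ J¹(θ;θ₂)`
at any `θ₁ ∈ (μ, θ₂)` (equation (A.2) of the paper). -/
theorem stmt_18 (p₀ δ κ M k₁ k₂ μ : ℝ) (fL : ℝ → ℝ) (θ₂ : ℝ)
    (hp₀ : p₀ ∈ Set.Ioo (0:ℝ) 1) (hδ : δ ∈ Set.Ioo (0:ℝ) 1)
    (hκ : κ ∈ Set.Ioo (1:ℝ) 2)
    (hk₁ : k₁ ∈ Set.Ioo (0:ℝ) 1) (hk₂ : k₂ ∈ Set.Ioo (0:ℝ) 1)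
    (hfc : ContinuousOn fL (Set.Ioi 0)) (hfpos : ∀ ℓ : ℝ, 0 < ℓ → 0 < fL ℓ)
    (hfint : IntegrableOn fL (Set.Ioi 0))
    (hftot : ∫ ℓ in Set.Ioi (0:ℝ), fL ℓ = 1 - p₀)
    (hmint : IntegrableOn (fun ℓ => ℓ * fL ℓ) (Set.Ioi 0))
    (hμ : μ = ∫ ℓ in Set.Ioi (0:ℝ), ℓ * fL ℓ) (hμpos : 0 < μ) (hM : κ * μ ≤ M)
    (hθ₂ : θ₂ ∈ Theta μ M κ) :
    ∀ θ₁ ∈ Set.Ioo μ θ₂,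
      HasDerivAt (fun θ : ℝ => J1 p₀ fL δ κ k₁ k₂ θ θ₂)
        (k₁ * (expEta k₁ k₂ (θ₂ - θ₁) - 1) *
            (θ₁ * (aProb p₀ fL δ κ k₁ k₂ θ₁ θ₂
                + κ * (1 - aProb p₀ fL δ κ k₁ k₂ θ₁ θ₂))
              - mRep fL δ κ k₁ k₂ θ₁ θ₂)
          + expEta k₁ k₂ (θ₂ - θ₁) *
            ((aProb p₀ fL δ κ k₁ k₂ θ₁ θ₂
                + κ * (1 - aProb p₀ fL δ κ k₁ k₂ θ₁ θ₂))
              + (θ₁ * (1 - κ) + repBarrier δ κ k₁ k₂ θ₁ θ₂) *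
                (fL (repBarrier δ κ k₁ k₂ θ₁ θ₂) * (δ * (κ - 1)) *
                  (expEta k₁ k₂ (θ₂ - θ₁)
                    + k₁ * (θ₂ - θ₁) * (1 - expEta k₁ k₂ (θ₂ - θ₁))))))
        θ₁ := by
  rintro θ₁ ⟨hμθ, hθlt⟩
  have ht : 0 < θ₂ - θ₁ := by linarith
  have hθ₁pos : 0 < θ₁ := lt_trans hμpos hμθ
  have hθ₂pos : 0 < θ₂ := lt_trans hθ₁pos hθlt
  -- bounds on Efun
  have hexp1 : Real.exp (-(k₁ * (θ₂ - θ₁))) ≤ 1 := by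
    rw [Real.exp_le_one_iff]
    nlinarith [hk₁.1, ht]
  have hexp0 : 0 < Real.exp (-(k₁ * (θ₂ - θ₁))) := Real.exp_pos _
  have hE0 : 0 < Efun k₁ k₂ θ₂ θ₁ := by
    simp only [Efun]; nlinarith [hk₂.1, hk₂.2]
  have hE1 : Efun k₁ k₂ θ₂ θ₁ ≤ 1 := by
    simp only [Efun]; nlinarith [hk₂.2]
  have hb : 0 < Bfun δ κ k₁ k₂ θ₂ θ₁ := by
    simp only [Bfun]
    have : 0 < Efun k₁ k₂ θ₂ θ₁ * θ₁ + (1 - Efun k₁ k₂ θ₂ θ₁) * θ₂ := by nlinarith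
    exact mul_pos (mul_pos hδ.1 (by linarith [hκ.1])) this
  set b : ℝ := Bfun δ κ k₁ k₂ θ₂ θ₁ with hbdef
  set T : ℝ := ∫ ℓ in Set.Ioi (0:ℝ), ℓ * fL ℓ with hTdef
  set B' : ℝ := δ * (κ - 1) * (Efun k₁ k₂ θ₂ θ₁ + k₁ * (θ₂ - θ₁) * (1 - Efun k₁ k₂ θ₂ θ₁))
    with hB'def
  have hB : HasDerivAt (fun θ => Bfun δ κ k₁ k₂ θ₂ θ) B' θ₁ := Bfun_hasDerivAt δ κ k₁ k₂ θ₂ θ₁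
  have hE : HasDerivAt (fun θ => Efun k₁ k₂ θ₂ θ) (k₁ * (Efun k₁ k₂ θ₂ θ₁ - 1)) θ₁ :=
    Efun_hasDerivAt k₁ k₂ θ₂ θ₁
  -- derivative of the cdf composed with the barrier
  have hGd : HasDerivAt (fun u => lossCdf p₀ fL u) (fL b) b := by
    have := (ftc_aux fL hfc hfint hb).const_add p₀
    exact this
  have hGB : HasDerivAt (fun θ => lossCdf p₀ fL (Bfun δ κ k₁ k₂ θ₂ θ)) (fL b * B') θ₁ :=
    HasDerivAt.comp θ₁ (h₂ := fun u => lossCdf p₀ fL u) hGd hB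
  -- derivative of the tail expectation composed with the barrier
  have hcmul : ContinuousOn (fun ℓ : ℝ => ℓ * fL ℓ) (Set.Ioi 0) := continuousOn_id.mul hfc
  have hHd : HasDerivAt (fun u => T - ∫ ℓ in (0:ℝ)..u, ℓ * fL ℓ) (-(b * fL b)) b := by
    have := (ftc_aux (fun ℓ => ℓ * fL ℓ) hcmul hmint hb).const_sub T
    exact this
  have hHB : HasDerivAt (fun θ => T - ∫ ℓ in (0:ℝ)..(Bfun δ κ k₁ k₂ θ₂ θ), ℓ * fL ℓ)
      (-(b * fL b) * B') θ₁ := HasDerivAt.comp θ₁ (h₂ := fun u => T - ∫ ℓ in (0:ℝ)..u, ℓ * fL ℓ) hHd hB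
  -- derivative of the inner bracket
  have h1 : HasDerivAt (fun θ => lossCdf p₀ fL (Bfun δ κ k₁ k₂ θ₂ θ)
      + κ * (1 - lossCdf p₀ fL (Bfun δ κ k₁ k₂ θ₂ θ)))
      (fL b * B' + κ * (-(fL b * B'))) θ₁ :=
    hGB.add (HasDerivAt.const_mul κ (hGB.const_sub 1))
  have h2 : HasDerivAt (fun θ => θ * (lossCdf p₀ fL (Bfun δ κ k₁ k₂ θ₂ θ)
      + κ * (1 - lossCdf p₀ fL (Bfun δ κ k₁ k₂ θ₂ θ)))
      - (T - ∫ ℓ in (0:ℝ)..(Bfun δ κ k₁ k₂ θ₂ θ), ℓ * fL ℓ))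
      (1 * (lossCdf p₀ fL b + κ * (1 - lossCdf p₀ fL b))
        + θ₁ * (fL b * B' + κ * (-(fL b * B'))) - (-(b * fL b) * B')) θ₁ :=
    ((hasDerivAt_id θ₁).mul h1).sub hHB
  have hJ : HasDerivAt (fun θ => Efun k₁ k₂ θ₂ θ *
      (θ * (lossCdf p₀ fL (Bfun δ κ k₁ k₂ θ₂ θ)
        + κ * (1 - lossCdf p₀ fL (Bfun δ κ k₁ k₂ θ₂ θ)))
      - (T - ∫ ℓ in (0:ℝ)..(Bfun δ κ k₁ k₂ θ₂ θ), ℓ * fL ℓ)))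
      (k₁ * (Efun k₁ k₂ θ₂ θ₁ - 1) *
        (θ₁ * (lossCdf p₀ fL b + κ * (1 - lossCdf p₀ fL b))
          - (T - ∫ ℓ in (0:ℝ)..b, ℓ * fL ℓ))
        + Efun k₁ k₂ θ₂ θ₁ *
          (1 * (lossCdf p₀ fL b + κ * (1 - lossCdf p₀ fL b))
            + θ₁ * (fL b * B' + κ * (-(fL b * B'))) - (-(b * fL b) * B'))) θ₁ :=
    hE.mul h2
  -- eventual equality of J1 with the smooth version
  have heq : (fun θ : ℝ => J1 p₀ fL δ κ k₁ k₂ θ θ₂) =ᶠ[nhds θ₁]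
      (fun θ => Efun k₁ k₂ θ₂ θ *
        (θ * (lossCdf p₀ fL (Bfun δ κ k₁ k₂ θ₂ θ)
          + κ * (1 - lossCdf p₀ fL (Bfun δ κ k₁ k₂ θ₂ θ)))
        - (T - ∫ ℓ in (0:ℝ)..(Bfun δ κ k₁ k₂ θ₂ θ), ℓ * fL ℓ))) := by
    have hb_ev : (fun θ => Bfun δ κ k₁ k₂ θ₂ θ) ⁻¹' Set.Ioi 0 ∈ nhds θ₁ :=
      hB.continuousAt.preimage_mem_nhds (Ioi_mem_nhds hb)
    filter_upwards [Iio_mem_nhds hθlt, hb_ev] with θ hθ hbθ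
    simp only [Set.mem_preimage, Set.mem_Ioi] at hbθ
    have hEθ : expEta k₁ k₂ (θ₂ - θ) = Efun k₁ k₂ θ₂ θ := by
      rw [expEta, if_pos (by simp only [Set.mem_Iio] at hθ; linarith)]; rfl
    have hBθ : repBarrier δ κ k₁ k₂ θ θ₂ = Bfun δ κ k₁ k₂ θ₂ θ := by
      rw [repBarrier, hEθ]; rfl
    simp only [J1, aProb, mRep, hEθ, hBθ]
    rw [tail_aux (fun ℓ => ℓ * fL ℓ) hmint hbθ]
  have hJ1 := hJ.congr_of_eventuallyEq heq
  -- identify the stated derivative with the computed one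
  have hEeq : expEta k₁ k₂ (θ₂ - θ₁) = Efun k₁ k₂ θ₂ θ₁ := by
    rw [expEta, if_pos ht.le]; rfl
  have hBeq : repBarrier δ κ k₁ k₂ θ₁ θ₂ = b := by
    rw [repBarrier, hEeq, hbdef]; rfl
  have haeq : aProb p₀ fL δ κ k₁ k₂ θ₁ θ₂ = lossCdf p₀ fL b := by
    rw [aProb, hBeq]
  have hmeq : mRep fL δ κ k₁ k₂ θ₁ θ₂ = T - ∫ ℓ in (0:ℝ)..b, ℓ * fL ℓ := by
    rw [mRep, hBeq]
    exact tail_aux (fun ℓ => ℓ * fL ℓ) hmint hb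
  refine hJ1.congr_deriv ?_
  rw [hEeq, haeq, hmeq, hBeq, hB'def]
  ring

end
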